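/- In the setting of the context (in particular d ≥ 3, G is d-claw free, A is a maximal independent set, A* is a maximum-weight independent set, and every u ∈ A'* satisfies w(N(u,A)) < 3·w(u) since A'* is disjoint from P): if there exists a vertex u ∈ A'* with N(u,A') = ∅, then there exists a local improvement of w²(A). -/

import Mathlib

open Finset

open scoped Classical

variable {V : Type*}

noncomputable section

/-- Neighborhood of `U` in `W`: vertices of `W` that lie in `U` or are adjacent to some
vertex of `U`. -/
def nbhd (G : SimpleGraph V) (U W : Finset V) : Finset V :=
  W.filter (fun x => x ∈ U ∨ ∃ u ∈ U, G.Adj u x)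

/-- Neighborhood of a single vertex `u` in `W`. -/
def nbhd1 (G : SimpleGraph V) (u : V) (W : Finset V) : Finset V :=
  nbhd G {u} W

/-- Total weight of a finite set of vertices. -/
def wsum (w : V → ℝ) (U : Finset V) : ℝ := ∑ x ∈ U, w x

/-- Total squared weight of a finite set of vertices. -/
def wsq (w : V → ℝ) (U : Finset V) : ℝ := ∑ x ∈ U, (w x) ^ 2

/-- A finite set of vertices is independent. -/
def IsIndep (G : SimpleGraph V) (S : Finset V) : Prop :=
  ∀ a ∈ S, ∀ b ∈ S, a ≠ b → ¬ G.Adj a b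

/-- `G` is `d`-claw free: every independent subset of the neighborhood of any vertex has
size at most `d - 1`. -/
def ClawFree (G : SimpleGraph V) (d : ℕ) : Prop :=
  ∀ v : V, ∀ S : Finset V, (∀ x ∈ S, G.Adj v x) → IsIndep G S → S.card ≤ d - 1

/-- `X` is a local improvement of `w²(A)`. -/
def LocalImprovement (G : SimpleGraph V) (d : ℕ) (w : V → ℝ) (A X : Finset V) : Prop :=
  IsIndep G X ∧ X.card ≤ (d - 1) ^ 2 + (d - 1) ∧ wsq w (nbhd G X A) < wsq w X

/-- No claw improves `w²(A)`: `w²(T) ≤ w²(N(T,A))` for every independent set `T` that is a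
singleton or whose vertices are all adjacent to a common vertex. -/
def NoClawImproves (G : SimpleGraph V) (w : V → ℝ) (A : Finset V) : Prop :=
  ∀ T : Finset V, IsIndep G T → (T.card = 1 ∨ ∃ v : V, ∀ x ∈ T, G.Adj v x) →
    wsq w T ≤ wsq w (nbhd G T A)

/-- The charge map, relative to a choice `n` of heaviest neighbors. -/
def charge (G : SimpleGraph V) (w : V → ℝ) (A : Finset V) (n : V → V) (u v : V) : ℝ :=
  if v = n u then w u - wsum w (nbhd1 G u A) / 2 else 0

/-- `u ∈ T_v` is single (with `√ε = 1/2304`). -/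
def IsSingle (G : SimpleGraph V) (w : V → ℝ) (A : Finset V) (u v : V) : Prop :=
  (1 - 1 / 2304 : ℝ) ≤ w u / w v ∧ w u / w v ≤ 1 + 1 / 2304 ∧
  wsum w (nbhd1 G u A) ≤ (1 + 1 / 2304) * w v

/-- `u ∈ T_v` is double (with `√ε = 1/2304`). -/
def IsDouble (G : SimpleGraph V) (w : V → ℝ) (A : Finset V) (u v : V) : Prop :=
  2 ≤ (nbhd1 G u A).card ∧
  ∃ v₂ ∈ (nbhd1 G u A).erase v, (∀ x ∈ (nbhd1 G u A).erase v, w x ≤ w v₂) ∧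
    (1 - 1 / 2304 : ℝ) ≤ w u / w v ∧ w u / w v ≤ 1 + 1 / 2304 ∧
    (1 - 1 / 2304 : ℝ) ≤ w v₂ / w v ∧ w v₂ / w v ≤ 1 ∧
    (2 - 1 / 2304) * w v ≤ wsum w (nbhd1 G u A) ∧ wsum w (nbhd1 G u A) < 2 * w u

/-- The contribution map. -/
def contr (G : SimpleGraph V) (w : V → ℝ) (A : Finset V) (u v : V) : ℝ :=
  if v ∈ nbhd1 G u A then max 0 (((w u) ^ 2 - wsq w ((nbhd1 G u A).erase v)) / w v) else 0

lemma my_wsq_nonneg (w : V → ℝ) (S : Finset V) : 0 ≤ wsq w S :=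
  Finset.sum_nonneg fun _ _ => sq_nonneg _

lemma my_wsq_mono (w : V → ℝ) {S T : Finset V} (h : S ⊆ T) : wsq w S ≤ wsq w T :=
  Finset.sum_le_sum_of_subset_of_nonneg h fun _ _ _ => sq_nonneg _

lemma my_wsq_union_le (w : V → ℝ) (S T : Finset V) : wsq w (S ∪ T) ≤ wsq w S + wsq w T := by
  classical
  have h1 : S ∪ T = S ∪ (T \ S) := by rw [Finset.union_sdiff_self_eq_union]
  rw [wsq, h1, Finset.sum_union Finset.disjoint_sdiff]
  exact add_le_add_right
    (Finset.sum_le_sum_of_subset_of_nonneg Finset.sdiff_subset fun _ _ _ => sq_nonneg _) _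

lemma my_wsq_biUnion_le (w : V → ℝ) (s : Finset V) (f : V → Finset V) :
    wsq w (s.biUnion f) ≤ ∑ v ∈ s, wsq w (f v) := by
  classical
  induction s using Finset.induction with
  | empty => simp [wsq]
  | @insert a s ha ih =>
    rw [Finset.biUnion_insert, Finset.sum_insert ha]
    exact le_trans (my_wsq_union_le w _ _) (by linarith)

theorem stmt17 [Fintype V] (G : SimpleGraph V) (d : ℕ) (hd : 3 ≤ d) (hG : ClawFree G d)
    (w : V → ℝ) (hw : ∀ v, 0 < w v) (Astar A : Finset V)
    (hAstarIndep : IsIndep G Astar)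
    (hAstarMax : ∀ S : Finset V, IsIndep G S → wsum w S ≤ wsum w Astar)
    (hAIndep : IsIndep G A) (hAmax : ∀ v : V, (nbhd1 G v A).Nonempty)
    (n : V → V)
    (hn : ∀ u ∈ Astar, n u ∈ nbhd1 G u A ∧ ∀ x ∈ nbhd1 G u A, w x ≤ w (n u))
    (B : Finset V) (hBsub : B ⊆ A) (t : V → V)
    (ht : ∀ v ∈ B, t v ∈ Astar ∧ 0 < charge G w A n (t v) v ∧ IsSingle G w A (t v) v
        ∧ ∀ u ∈ Astar, 0 < charge G w A n u v → IsSingle G w A u v → u = t v)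
    (u : V)
    (hu : u ∈ Astar \ (B.image t
        ∪ Astar.filter (fun x => 3 * w x ≤ wsum w (nbhd1 G x A))))
    (hempty : nbhd1 G u (A \ B) = ∅) :
    ∃ X : Finset V, LocalImprovement G d w A X := by
  classical
  obtain ⟨huAstar, hunotin⟩ := Finset.mem_sdiff.mp hu
  set N : Finset V := nbhd1 G u A with hNdef
  have hmemN : ∀ x, x ∈ N ↔ x ∈ A ∧ (x = u ∨ G.Adj u x) := by
    intro x; simp [hNdef, nbhd1, nbhd]
  have hwsumlt : wsum w N < 3 * w u := by
    by_contra h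
    push_neg at h
    exact hunotin (Finset.mem_union_right _ (Finset.mem_filter.mpr ⟨huAstar, h⟩))
  have hNB : ∀ v ∈ N, v ∈ B := by
    intro v hv
    by_contra hvB
    rw [hmemN] at hv
    have hmem : v ∈ nbhd1 G u (A \ B) := by
      simp only [nbhd1, nbhd, Finset.mem_filter, Finset.mem_sdiff, Finset.mem_singleton]
      refine ⟨⟨hv.1, hvB⟩, ?_⟩
      rcases hv.2 with h | h
      · exact Or.inl h
      · exact Or.inr ⟨u, rfl, h⟩
    rw [hempty] at hmem
    exact absurd hmem (Finset.notMem_empty v)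
  have hkey : ∀ v ∈ N, t v ∈ Astar ∧ v = n (t v) ∧ IsSingle G w A (t v) v := by
    intro v hv
    obtain ⟨h1, h2, h3, _⟩ := ht v (hNB v hv)
    refine ⟨h1, ?_, h3⟩
    by_contra hne
    rw [charge, if_neg hne] at h2
    exact lt_irrefl 0 h2
  have hinj : ∀ v ∈ N, ∀ v' ∈ N, t v = t v' → v = v' := by
    intro v hv v' hv' h
    rw [(hkey v hv).2.1, (hkey v' hv').2.1, h]
  have hne_u : ∀ v ∈ N, t v ≠ u := by
    intro v hv h
    exact hunotin (Finset.mem_union_left _ (Finset.mem_image.mpr ⟨v, hNB v hv, h⟩))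
  set X : Finset V := insert u (N.image t) with hXdef
  have hXsub : X ⊆ Astar := by
    rw [hXdef]
    apply Finset.insert_subset huAstar
    intro x hx
    obtain ⟨v, hv, rfl⟩ := Finset.mem_image.mp hx
    exact (hkey v hv).1
  have hXindep : IsIndep G X := fun a ha b hb hab => hAstarIndep a (hXsub ha) b (hXsub hb) hab
  -- cardinality bound
  have hNcard : N.card ≤ d := by
    have h1 : (N.erase u).card ≤ d - 1 := by
      apply hG u
      · intro x hx
        have hx' := Finset.mem_of_mem_erase hx
        have hxu := Finset.ne_of_mem_erase hx
        rcases ((hmemN x).mp hx').2 with h | h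
        · exact absurd h hxu
        · exact h
      · intro a ha b hb hab
        exact hAIndep a ((hmemN a).mp (Finset.mem_of_mem_erase ha)).1
          b ((hmemN b).mp (Finset.mem_of_mem_erase hb)).1 hab
    have h2 : N ⊆ insert u (N.erase u) := by
      intro x hx
      rcases eq_or_ne x u with rfl | hne
      · exact Finset.mem_insert_self _ _
      · exact Finset.mem_insert_of_mem (Finset.mem_erase.mpr ⟨hne, hx⟩)
    have h3 := Finset.card_le_card h2
    have h4 := Finset.card_insert_le u (N.erase u)
    omega
  have hXcard : X.card ≤ (d - 1) ^ 2 + (d - 1) := by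
    have h1 := Finset.card_insert_le u (N.image t)
    have h2 := Finset.card_image_le (s := N) (f := t)
    have h3 : X.card ≤ d + 1 := by rw [hXdef] at *; omega
    obtain ⟨m, hm⟩ : ∃ m, d = m + 3 := ⟨d - 3, by omega⟩
    have h4 : d - 1 = m + 2 := by omega
    rw [h4]
    nlinarith
  -- each v ∈ N lies in the neighborhood of t v
  have hvN_mem : ∀ v ∈ N, v ∈ nbhd1 G (t v) A := by
    intro v hv
    have h2 := (hkey v hv).2.1
    have h3 := (hn (t v) (hkey v hv).1).1
    rwa [← h2] at h3
  -- covering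
  have hcover : nbhd G X A ⊆ N.biUnion (fun v => nbhd1 G (t v) A) := by
    intro x hx
    rw [nbhd, Finset.mem_filter] at hx
    obtain ⟨hxA, hx2⟩ := hx
    rw [Finset.mem_biUnion]
    rcases hx2 with hx2 | ⟨y, hy, hadj⟩
    · rw [hXdef, Finset.mem_insert] at hx2
      rcases hx2 with rfl | hx2
      · have hxN : x ∈ N := (hmemN x).mpr ⟨hxA, Or.inl rfl⟩
        exact ⟨x, hxN, hvN_mem x hxN⟩
      · obtain ⟨v, hv, rfl⟩ := Finset.mem_image.mp hx2
        refine ⟨v, hv, ?_⟩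
        simp only [nbhd1, nbhd, Finset.mem_filter, Finset.mem_singleton]
        tauto
    · rw [hXdef, Finset.mem_insert] at hy
      rcases hy with rfl | hy
      · have hxN : x ∈ N := (hmemN x).mpr ⟨hxA, Or.inr hadj⟩
        exact ⟨x, hxN, hvN_mem x hxN⟩
      · obtain ⟨v, hv, rfl⟩ := Finset.mem_image.mp hy
        refine ⟨v, hv, ?_⟩
        simp only [nbhd1, nbhd, Finset.mem_filter, Finset.mem_singleton]
        exact ⟨hxA, Or.inr ⟨t v, rfl, hadj⟩⟩
  -- upper bound on each neighborhood
  have hupper : ∀ v ∈ N, wsq w (nbhd1 G (t v) A) ≤ (1 + 1 / 2304) * (w v) ^ 2 := by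
    intro v hv
    obtain ⟨h1, h2, _, _, hs3⟩ := hkey v hv
    have hmax : ∀ x ∈ nbhd1 G (t v) A, w x ≤ w v := by
      intro x hx
      have h := (hn (t v) h1).2 x hx
      rwa [← h2] at h
    have step1 : wsq w (nbhd1 G (t v) A) ≤ w v * wsum w (nbhd1 G (t v) A) := by
      rw [wsq, wsum, Finset.mul_sum]
      apply Finset.sum_le_sum
      intro x hx
      nlinarith [hmax x hx, (hw x).le]
    calc wsq w (nbhd1 G (t v) A) ≤ w v * wsum w (nbhd1 G (t v) A) := step1
      _ ≤ w v * ((1 + 1 / 2304) * w v) := mul_le_mul_of_nonneg_left hs3 (hw v).le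
      _ = (1 + 1 / 2304) * (w v) ^ 2 := by ring
  -- lower bound on w (t v)
  have hlower : ∀ v ∈ N, (1 - 1 / 2304 : ℝ) ^ 2 * (w v) ^ 2 ≤ (w (t v)) ^ 2 := by
    intro v hv
    obtain ⟨hs1, hs2, hs3⟩ := (hkey v hv).2.2
    have hv0 := hw v
    have h1 : (1 - 1 / 2304 : ℝ) * w v ≤ w (t v) := (le_div_iff₀ hv0).mp hs1
    have ha : (0:ℝ) ≤ (1 - 1 / 2304) * w v := by positivity
    nlinarith [mul_self_le_mul_self ha h1]
  have hle : ∀ v ∈ N, w v ≤ wsum w N := by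
    intro v hv
    rw [wsum]
    exact Finset.single_le_sum (fun x _ => (hw x).le) hv
  set S : ℝ := ∑ v ∈ N, (w v) ^ 2 with hSdef
  have hS0 : 0 ≤ S := Finset.sum_nonneg fun x _ => sq_nonneg _
  have hs0 : 0 ≤ wsum w N := Finset.sum_nonneg fun x _ => (hw x).le
  have hSle : S ≤ 3 * w u * wsum w N := by
    rw [hSdef, wsum, Finset.mul_sum]
    apply Finset.sum_le_sum
    intro v hv
    have h1 : w v < 3 * w u := lt_of_le_of_lt (hle v hv) hwsumlt
    nlinarith [hw v]
  have hS9 : S < 9 * (w u) ^ 2 := by nlinarith [hw u, hwsumlt, hs0]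
  have hu_not_img : u ∉ N.image t := by
    intro h
    obtain ⟨v, hv, hvu⟩ := Finset.mem_image.mp h
    exact hne_u v hv hvu
  have hwsqX : wsq w X = (w u) ^ 2 + ∑ v ∈ N, (w (t v)) ^ 2 := by
    rw [hXdef, wsq, Finset.sum_insert hu_not_img, Finset.sum_image hinj]
  have hfinal1 : wsq w (nbhd G X A) ≤ (1 + 1 / 2304) * S := by
    calc wsq w (nbhd G X A) ≤ wsq w (N.biUnion fun v => nbhd1 G (t v) A) := my_wsq_mono w hcover
      _ ≤ ∑ v ∈ N, wsq w (nbhd1 G (t v) A) := my_wsq_biUnion_le w N _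
      _ ≤ ∑ v ∈ N, (1 + 1 / 2304) * (w v) ^ 2 := Finset.sum_le_sum hupper
      _ = (1 + 1 / 2304) * S := by rw [hSdef, Finset.mul_sum]
  have hfinal2 : (w u) ^ 2 + (1 - 1 / 2304 : ℝ) ^ 2 * S ≤ wsq w X := by
    have h := Finset.sum_le_sum hlower
    rw [hwsqX]
    have heq : (1 - 1 / 2304 : ℝ) ^ 2 * S = ∑ v ∈ N, (1 - 1 / 2304 : ℝ) ^ 2 * (w v) ^ 2 := by
      rw [hSdef, Finset.mul_sum]
    linarith
  refine ⟨X, hXindep, hXcard, ?_⟩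
  have : (1 + 1 / 2304 : ℝ) * S < (w u) ^ 2 + (1 - 1 / 2304 : ℝ) ^ 2 * S := by
    nlinarith [hS0, hS9, sq_nonneg (w u)]
  linarith

end
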